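/- For Demazure operators on ℤ[x_1,…,x_n], the braid relation ∂_i ∂_{i+1} ∂_i = ∂_{i+1} ∂_i ∂_{i+1} holds, and ∂_i ∂_j = ∂_j ∂_i whenever |i − j| > 1. -/

import Mathlib

open MvPolynomial

/-- The simple transposition `s_i` acting on `ℤ[x_1,…,x_n]` by swapping `x_i` and `x_{i+1}`
(0-based indices `i`, `i+1`). -/
noncomputable def sSwap (n i : ℕ) (h : i + 1 < n) :
    MvPolynomial (Fin n) ℤ → MvPolynomial (Fin n) ℤ :=
  fun f => rename ⇑(Equiv.swap (⟨i, Nat.lt_of_succ_lt h⟩ : Fin n) ⟨i + 1, h⟩) f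

/-- `D` is the Demazure operator `∂_i`, characterized by
`(x_i − x_{i+1}) · D f = f − s_i f` for all `f`. -/
def IsDemazure (n i : ℕ) (h : i + 1 < n)
    (D : MvPolynomial (Fin n) ℤ → MvPolynomial (Fin n) ℤ) : Prop :=
  ∀ f, (X (⟨i, Nat.lt_of_succ_lt h⟩ : Fin n) - X ⟨i + 1, h⟩) * D f = f - sSwap n i h f

private lemma X_sub_ne {n : ℕ} {a b : Fin n} (hab : a ≠ b) :
    (X a - X b : MvPolynomial (Fin n) ℤ) ≠ 0 := by
  rw [sub_ne_zero]
  exact fun h => hab (MvPolynomial.X_injective h)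

private lemma swap_invol {n : ℕ} (a b : Fin n) (p : MvPolynomial (Fin n) ℤ) :
    rename ⇑(Equiv.swap a b) (rename ⇑(Equiv.swap a b) p) = p := by
  rw [rename_rename,
    show ⇑(Equiv.swap a b) ∘ ⇑(Equiv.swap a b) = id from
      funext fun x => Equiv.swap_apply_self a b x, rename_id, AlgHom.id_apply]

private lemma swap_braid_fun {n : ℕ} {a b c : Fin n} (hab : a ≠ b) (hac : a ≠ c) (hbc : b ≠ c) :
    ⇑(Equiv.swap a b) ∘ ⇑(Equiv.swap b c) ∘ ⇑(Equiv.swap a b) =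
    ⇑(Equiv.swap b c) ∘ ⇑(Equiv.swap a b) ∘ ⇑(Equiv.swap b c) := by
  funext x
  rcases eq_or_ne x a with rfl | hxa
  · simp [Equiv.swap_apply_of_ne_of_ne, hab, hac, hbc, hab.symm, hac.symm, hbc.symm]
  rcases eq_or_ne x b with rfl | hxb
  · simp [Equiv.swap_apply_of_ne_of_ne, hab, hac, hbc, hab.symm, hac.symm, hbc.symm]
  rcases eq_or_ne x c with rfl | hxc
  · simp [Equiv.swap_apply_of_ne_of_ne, hab, hac, hbc, hab.symm, hac.symm, hbc.symm]
  · simp [Equiv.swap_apply_of_ne_of_ne, hxa, hxb, hxc]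

private lemma rename_braid {n : ℕ} {a b c : Fin n} (hab : a ≠ b) (hac : a ≠ c) (hbc : b ≠ c)
    (f : MvPolynomial (Fin n) ℤ) :
    rename ⇑(Equiv.swap a b) (rename ⇑(Equiv.swap b c) (rename ⇑(Equiv.swap a b) f)) =
    rename ⇑(Equiv.swap b c) (rename ⇑(Equiv.swap a b) (rename ⇑(Equiv.swap b c) f)) := by
  rw [rename_rename, rename_rename, rename_rename, rename_rename, Function.comp_assoc,
    swap_braid_fun hab hac hbc, Function.comp_assoc]

private lemma swap_comm_fun {n : ℕ} {a b c d : Fin n}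
    (hac : a ≠ c) (had : a ≠ d) (hbc : b ≠ c) (hbd : b ≠ d) :
    ⇑(Equiv.swap a b) ∘ ⇑(Equiv.swap c d) = ⇑(Equiv.swap c d) ∘ ⇑(Equiv.swap a b) := by
  funext x
  rcases eq_or_ne x a with rfl | hxa
  · simp [Equiv.swap_apply_of_ne_of_ne, hac, had, hbc, hbd]
  rcases eq_or_ne x b with rfl | hxb
  · simp [Equiv.swap_apply_of_ne_of_ne, hac, had, hbc, hbd]
  rcases eq_or_ne x c with rfl | hxc
  · simp [Equiv.swap_apply_of_ne_of_ne, hac.symm, hbc.symm, had.symm, hbd.symm, hxa, hxb]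
  rcases eq_or_ne x d with rfl | hxd
  · simp [Equiv.swap_apply_of_ne_of_ne, had.symm, hbd.symm, hac.symm, hbc.symm, hxa, hxb]
  · simp [Equiv.swap_apply_of_ne_of_ne, hxa, hxb, hxc, hxd]

private lemma rename_comm {n : ℕ} {a b c d : Fin n}
    (hac : a ≠ c) (had : a ≠ d) (hbc : b ≠ c) (hbd : b ≠ d)
    (f : MvPolynomial (Fin n) ℤ) :
    rename ⇑(Equiv.swap a b) (rename ⇑(Equiv.swap c d) f) =
    rename ⇑(Equiv.swap c d) (rename ⇑(Equiv.swap a b) f) := by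
  rw [rename_rename, rename_rename, swap_comm_fun hac had hbc hbd]

section Braid

variable {n : ℕ} {a b c : Fin n}

/-- First key formula : `α²βγ ∂ᵃᵇ∂ᵇᶜ∂ᵃᵇ f = α (f - sf - tf + tsf + stf - stsf)`. -/
private lemma key1 (hab : a ≠ b) (hac : a ≠ c) (hbc : b ≠ c)
    {D E : MvPolynomial (Fin n) ℤ → MvPolynomial (Fin n) ℤ}
    (hD : ∀ f, (X a - X b) * D f = f - rename ⇑(Equiv.swap a b) f)
    (hE : ∀ f, (X b - X c) * E f = f - rename ⇑(Equiv.swap b c) f)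
    (f : MvPolynomial (Fin n) ℤ) :
    (X a - X b) * ((X a - X b) * ((X b - X c) * ((X a - X c) * D (E (D f))))) =
    (X a - X b) *
      (f - rename ⇑(Equiv.swap a b) f - rename ⇑(Equiv.swap b c) f
        + rename ⇑(Equiv.swap b c) (rename ⇑(Equiv.swap a b) f)
        + rename ⇑(Equiv.swap a b) (rename ⇑(Equiv.swap b c) f)
        - rename ⇑(Equiv.swap a b) (rename ⇑(Equiv.swap b c) (rename ⇑(Equiv.swap a b) f))) := by
  set S := rename (R := ℤ) (⇑(Equiv.swap a b)) with hS
  set T := rename (R := ℤ) (⇑(Equiv.swap b c)) with hT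
  -- action of S, T on the linear forms
  have hSab : S ((X a : MvPolynomial (Fin n) ℤ) - X b) = X b - X a := by
    simp [hS, Equiv.swap_apply_left, Equiv.swap_apply_right]
  have hSbc : S ((X b : MvPolynomial (Fin n) ℤ) - X c) = X a - X c := by
    simp [hS, Equiv.swap_apply_left, Equiv.swap_apply_of_ne_of_ne hac.symm hbc.symm]
  have hSac : S ((X a : MvPolynomial (Fin n) ℤ) - X c) = X b - X c := by
    simp [hS, Equiv.swap_apply_left, Equiv.swap_apply_of_ne_of_ne hac.symm hbc.symm]
  have hTab : T ((X a : MvPolynomial (Fin n) ℤ) - X b) = X a - X c := by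
    simp [hT, Equiv.swap_apply_left, Equiv.swap_apply_of_ne_of_ne hab hac]
  -- basic relations
  have h1 : (X a - X b) * D f = f - S f := hD f
  have h2 : (X b - X c) * E (D f) = D f - T (D f) := hE (D f)
  have h3 : (X a - X b) * D (E (D f)) = E (D f) - S (E (D f)) := hD (E (D f))
  -- derived relations
  have e1 : (X a - X c) * T (D f) = T f - T (S f) := by
    have h := congrArg T h1
    simp only [map_mul, map_sub, hTab] at h
    linear_combination h
  have e3 : (X a - X c) * S (E (D f)) = S (D f) - S (T (D f)) := by
    have h := congrArg S h2
    simp only [map_mul, map_sub, hSbc] at h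
    linear_combination h
  have e4 : (X a - X b) * S (D f) = f - S f := by
    have h := congrArg S h1
    simp only [map_mul, map_sub, hSab] at h
    rw [hS, swap_invol] at h
    linear_combination -h
  have e5 : (X b - X c) * S (T (D f)) = S (T f) - S (T (S f)) := by
    have h := congrArg S e1
    simp only [map_mul, map_sub, hSac] at h
    linear_combination h
  linear_combination ((X a - X b) * (X b - X c) * (X a - X c)) * h3
    + ((X a - X b) * (X a - X c)) * h2 - ((X a - X b) * (X b - X c)) * e3
    + (X a - X c) * h1 - (X a - X b) * e1 - (X b - X c) * e4 + (X a - X b) * e5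

/-- Second key formula : `αβ²γ ∂ᵇᶜ∂ᵃᵇ∂ᵇᶜ f = β (f - tf - sf + stf + tsf - tstf)`. -/
private lemma key2 (hab : a ≠ b) (hac : a ≠ c) (hbc : b ≠ c)
    {D E : MvPolynomial (Fin n) ℤ → MvPolynomial (Fin n) ℤ}
    (hD : ∀ f, (X a - X b) * D f = f - rename ⇑(Equiv.swap a b) f)
    (hE : ∀ f, (X b - X c) * E f = f - rename ⇑(Equiv.swap b c) f)
    (f : MvPolynomial (Fin n) ℤ) :
    (X b - X c) * ((X b - X c) * ((X a - X b) * ((X a - X c) * E (D (E f))))) =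
    (X b - X c) *
      (f - rename ⇑(Equiv.swap b c) f - rename ⇑(Equiv.swap a b) f
        + rename ⇑(Equiv.swap a b) (rename ⇑(Equiv.swap b c) f)
        + rename ⇑(Equiv.swap b c) (rename ⇑(Equiv.swap a b) f)
        - rename ⇑(Equiv.swap b c) (rename ⇑(Equiv.swap a b) (rename ⇑(Equiv.swap b c) f))) := by
  set S := rename (R := ℤ) (⇑(Equiv.swap a b)) with hS
  set T := rename (R := ℤ) (⇑(Equiv.swap b c)) with hT
  have hSbc : S ((X b : MvPolynomial (Fin n) ℤ) - X c) = X a - X c := by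
    simp [hS, Equiv.swap_apply_left, Equiv.swap_apply_of_ne_of_ne hac.symm hbc.symm]
  have hTbc : T ((X b : MvPolynomial (Fin n) ℤ) - X c) = X c - X b := by
    simp [hT, Equiv.swap_apply_left, Equiv.swap_apply_right]
  have hTab : T ((X a : MvPolynomial (Fin n) ℤ) - X b) = X a - X c := by
    simp [hT, Equiv.swap_apply_left, Equiv.swap_apply_of_ne_of_ne hab hac]
  have hTac : T ((X a : MvPolynomial (Fin n) ℤ) - X c) = X a - X b := by
    simp [hT, Equiv.swap_apply_right, Equiv.swap_apply_of_ne_of_ne hab hac]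
  have k1 : (X b - X c) * E f = f - T f := hE f
  have k2 : (X a - X b) * D (E f) = E f - S (E f) := hD (E f)
  have k3 : (X b - X c) * E (D (E f)) = D (E f) - T (D (E f)) := hE (D (E f))
  have d1 : (X a - X c) * S (E f) = S f - S (T f) := by
    have h := congrArg S k1
    simp only [map_mul, map_sub, hSbc] at h
    linear_combination h
  have d2 : (X b - X c) * T (E f) = f - T f := by
    have h := congrArg T k1
    simp only [map_mul, map_sub, hTbc] at h
    rw [hT, swap_invol] at h
    linear_combination -h
  have d3 : (X a - X c) * T (D (E f)) = T (E f) - T (S (E f)) := by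
    have h := congrArg T k2
    simp only [map_mul, map_sub, hTab] at h
    linear_combination h
  have d4 : (X a - X b) * T (S (E f)) = T (S f) - T (S (T f)) := by
    have h := congrArg T d1
    simp only [map_mul, map_sub, hTac] at h
    linear_combination h
  linear_combination ((X a - X b) * (X b - X c) * (X a - X c)) * k3
    + ((X b - X c) * (X a - X c)) * k2 - ((X a - X b) * (X b - X c)) * d3
    + (X a - X c) * k1 - (X b - X c) * d1 - (X a - X b) * d2 + (X b - X c) * d4

private lemma braid_main (hab : a ≠ b) (hac : a ≠ c) (hbc : b ≠ c)
    {D E : MvPolynomial (Fin n) ℤ → MvPolynomial (Fin n) ℤ}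
    (hD : ∀ f, (X a - X b) * D f = f - rename ⇑(Equiv.swap a b) f)
    (hE : ∀ f, (X b - X c) * E f = f - rename ⇑(Equiv.swap b c) f)
    (f : MvPolynomial (Fin n) ℤ) :
    D (E (D f)) = E (D (E f)) := by
  have hα := X_sub_ne hab
  have hβ := X_sub_ne hbc
  have hγ := X_sub_ne hac
  apply mul_left_cancel₀
    (mul_ne_zero hα (mul_ne_zero hα (mul_ne_zero hβ (mul_ne_zero hβ hγ))))
  have hbr := rename_braid hab hac hbc f
  linear_combination (X b - X c) * key1 hab hac hbc hD hE f
    - (X a - X b) * key2 hab hac hbc hD hE f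
    - ((X a - X b) * (X b - X c)) * hbr

end Braid

private lemma distant_key {n : ℕ} {a b c d : Fin n}
    (hac : a ≠ c) (had : a ≠ d) (hbc : b ≠ c) (hbd : b ≠ d)
    {D E : MvPolynomial (Fin n) ℤ → MvPolynomial (Fin n) ℤ}
    (hD : ∀ f, (X a - X b) * D f = f - rename ⇑(Equiv.swap a b) f)
    (hE : ∀ f, (X c - X d) * E f = f - rename ⇑(Equiv.swap c d) f)
    (f : MvPolynomial (Fin n) ℤ) :
    (X a - X b) * ((X c - X d) * D (E f)) =
    f - rename ⇑(Equiv.swap c d) f - rename ⇑(Equiv.swap a b) f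
      + rename ⇑(Equiv.swap a b) (rename ⇑(Equiv.swap c d) f) := by
  set S := rename (R := ℤ) (⇑(Equiv.swap a b)) with hS
  have hScd : S ((X c : MvPolynomial (Fin n) ℤ) - X d) = X c - X d := by
    simp [hS, Equiv.swap_apply_of_ne_of_ne hac.symm hbc.symm,
      Equiv.swap_apply_of_ne_of_ne had.symm hbd.symm]
  have h1 : (X c - X d) * E f = f - rename ⇑(Equiv.swap c d) f := hE f
  have h2 : (X a - X b) * D (E f) = E f - S (E f) := hD (E f)
  have h3 : (X c - X d) * S (E f) = S f - S (rename ⇑(Equiv.swap c d) f) := by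
    have h := congrArg S h1
    simp only [map_mul, map_sub, hScd] at h
    linear_combination h
  linear_combination (X c - X d) * h2 + h1 - h3

/-- Braid relation `∂_i ∂_{i+1} ∂_i = ∂_{i+1} ∂_i ∂_{i+1}` and distant commutation
`∂_i ∂_j = ∂_j ∂_i` for `|i − j| > 1`. -/
theorem demazure_braid_and_distant (n : ℕ) :
    (∀ (i : ℕ) (h : i + 2 < n)
      (Di Dii : MvPolynomial (Fin n) ℤ → MvPolynomial (Fin n) ℤ),
      IsDemazure n i (Nat.lt_of_succ_lt h) Di → IsDemazure n (i + 1) h Dii →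
      ∀ f, Di (Dii (Di f)) = Dii (Di (Dii f))) ∧
    (∀ (i j : ℕ) (hi : i + 1 < n) (hj : j + 1 < n), i + 1 < j →
      ∀ (Di Dj : MvPolynomial (Fin n) ℤ → MvPolynomial (Fin n) ℤ),
      IsDemazure n i hi Di → IsDemazure n j hj Dj →
      ∀ f, Di (Dj f) = Dj (Di f)) := by
  constructor
  · intro i h Di Dii hDi hDii f
    have hia : i < n := by omega
    have hib : i + 1 < n := by omega
    set a : Fin n := ⟨i, hia⟩ with ha
    set b : Fin n := ⟨i + 1, hib⟩ with hb
    set c : Fin n := ⟨i + 2, h⟩ with hc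
    have hab : a ≠ b := by simp [ha, hb, Fin.ext_iff]
    have hac : a ≠ c := by simp [ha, hc, Fin.ext_iff]
    have hbc : b ≠ c := by simp [hb, hc, Fin.ext_iff]
    exact braid_main hab hac hbc hDi hDii f
  · intro i j hi hj hij Di Dj hDi hDj f
    have hia : i < n := by omega
    have hja : j < n := by omega
    set a : Fin n := ⟨i, hia⟩ with ha
    set b : Fin n := ⟨i + 1, hi⟩ with hb
    set c : Fin n := ⟨j, hja⟩ with hc
    set d : Fin n := ⟨j + 1, hj⟩ with hd
    have hac : a ≠ c := by simp [ha, hc, Fin.ext_iff]; omega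
    have had : a ≠ d := by simp [ha, hd, Fin.ext_iff]; omega
    have hbc : b ≠ c := by simp [hb, hc, Fin.ext_iff]; omega
    have hbd : b ≠ d := by simp [hb, hd, Fin.ext_iff]; omega
    have hab : a ≠ b := by simp [ha, hb, Fin.ext_iff]
    have hcd : c ≠ d := by simp [hc, hd, Fin.ext_iff]
    apply mul_left_cancel₀ (mul_ne_zero (X_sub_ne hab) (X_sub_ne hcd))
    have k1 := distant_key hac had hbc hbd hDi hDj f
    have k2 := distant_key hac.symm hbc.symm had.symm hbd.symm hDj hDi f
    have hcomm := rename_comm hac had hbc hbd f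
    linear_combination k1 - k2 + hcomm
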